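/- arXiv:2305.00203 — 6 statements merged into one kernel-verified Lean document; each statement's English description precedes it below -/
import Mathlib

section
/- Let n ≥ 1 and q ≥ 2 be integers, α ∈ {0,1}, γ ≥ 0, ρ > 0, φ > 0, let A₀ be a real symmetric positive definite n×n matrix, let A₁, …, A_q be real symmetric positive semidefinite n×n matrices, and let 1 ≤ k ≤ n. Let (x_l, y_l, z_l)_{l ≥ 0} be a BCD sequence with ‖z₀‖ ≤ 1. Then for every l ≥ 1, max{‖x_l‖, ‖y_l‖, ‖z_l‖} ≤ max{√(φ/λmin(A₀)), 1}, where λmin(A₀) denotes the smallest eigenvalue of A₀. -/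
open Matrix Finset Filter Topology

/-- Squared Euclidean norm on `ℝ^n`. -/
noncomputable def sqnorm {n : ℕ} (x : Fin n → ℝ) : ℝ := ∑ i, x i ^ 2

/-- Euclidean norm on `ℝ^n`. -/
noncomputable def euclNorm {n : ℕ} (x : Fin n → ℝ) : ℝ := Real.sqrt (sqnorm x)

/-- Quadratic form `xᵀ A x`. -/
noncomputable def qf {n : ℕ} (A : Matrix (Fin n) (Fin n) ℝ) (x : Fin n → ℝ) : ℝ :=
  x ⬝ᵥ A.mulVec x

/-- The penalized objective
`q_ρ(x,y,z) = α xᵀA₁x + γ Σ_{i=2}^{q} (zᵀA_i z)(xᵀA_i x) + ρ(‖x−y‖² + ‖x−z‖²)`. -/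
noncomputable def qrho {n : ℕ} (q : ℕ) (A : ℕ → Matrix (Fin n) (Fin n) ℝ)
    (α γ ρ : ℝ) (x y z : Fin n → ℝ) : ℝ :=
  α * qf (A 1) x + γ * ∑ i ∈ Finset.Icc 2 q, qf (A i) z * qf (A i) x
    + ρ * (sqnorm (x - y) + sqnorm (x - z))

/-- Smallest eigenvalue of a real matrix: the infimum of the set of `μ` such that
`A - μ I` is singular. -/
noncomputable def smallestEigenvalue {n : ℕ} (A : Matrix (Fin n) (Fin n) ℝ) : ℝ :=
  sInf {μ : ℝ | ¬ IsUnit (A - μ • (1 : Matrix (Fin n) (Fin n) ℝ))}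

/-- Largest eigenvalue of a real matrix: the supremum of the set of `μ` such that
`A - μ I` is singular. -/
noncomputable def largestEigenvalue {n : ℕ} (A : Matrix (Fin n) (Fin n) ℝ) : ℝ :=
  sSup {μ : ℝ | ¬ IsUnit (A - μ • (1 : Matrix (Fin n) (Fin n) ℝ))}

/-- Coordinate projection `x_L`: keeps the coordinates in `L`, zeroes the others. -/
noncomputable def proj {n : ℕ} (L : Finset (Fin n)) (x : Fin n → ℝ) : Fin n → ℝ :=
  fun i => if i ∈ L then x i else 0

/- ### Auxiliary lemmas -/

lemma sqnorm_nonneg {n : ℕ} (x : Fin n → ℝ) : 0 ≤ sqnorm x :=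
  Finset.sum_nonneg fun _ _ => sq_nonneg _

lemma enorm_nonneg {n : ℕ} (x : Fin n → ℝ) : 0 ≤ euclNorm x := Real.sqrt_nonneg _

lemma enorm_sq {n : ℕ} (x : Fin n → ℝ) : euclNorm x ^ 2 = sqnorm x :=
  Real.sq_sqrt (sqnorm_nonneg x)

lemma sqnorm_eq_dot {n : ℕ} (x : Fin n → ℝ) : sqnorm x = x ⬝ᵥ x := by
  simp [sqnorm, dotProduct, pow_two]

lemma dot_le_enorm_mul_enorm {n : ℕ} (x y : Fin n → ℝ) :
    x ⬝ᵥ y ≤ euclNorm x * euclNorm y := by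
  have h := Finset.sum_mul_sq_le_sq_mul_sq Finset.univ x y
  refine (le_abs_self _).trans ?_
  rw [← Real.sqrt_sq_eq_abs]
  unfold euclNorm
  rw [← Real.sqrt_mul (sqnorm_nonneg x)]
  exact Real.sqrt_le_sqrt (by simpa [dotProduct, sqnorm] using h)

lemma sqnorm_smul_sub {n : ℕ} (t : ℝ) (x y : Fin n → ℝ) :
    sqnorm (t • x - y) = t ^ 2 * sqnorm x - 2 * t * (x ⬝ᵥ y) + sqnorm y := by
  have h : ∀ i, (t * x i - y i) ^ 2 = t ^ 2 * x i ^ 2 - 2 * t * (x i * y i) + y i ^ 2 := by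
    intro i; ring
  simp only [sqnorm, Pi.sub_apply, Pi.smul_apply, smul_eq_mul, dotProduct, h,
    Finset.sum_add_distrib, Finset.sum_sub_distrib, ← Finset.mul_sum]

lemma sqnorm_sub_expand {n : ℕ} (x y : Fin n → ℝ) :
    sqnorm (x - y) = sqnorm x - 2 * (x ⬝ᵥ y) + sqnorm y := by
  simpa using sqnorm_smul_sub (n := n) 1 x y

lemma sqnorm_sub_comm {n : ℕ} (x y : Fin n → ℝ) : sqnorm (x - y) = sqnorm (y - x) := by
  simp only [sqnorm, Pi.sub_apply]
  exact Finset.sum_congr rfl fun i _ => by ring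

lemma sqnorm_smul {n : ℕ} (t : ℝ) (x : Fin n → ℝ) :
    sqnorm (t • x) = t ^ 2 * sqnorm x := by
  simp [sqnorm, Finset.mul_sum, mul_pow]

lemma qf_smul {n : ℕ} (A : Matrix (Fin n) (Fin n) ℝ) (t : ℝ) (x : Fin n → ℝ) :
    qf A (t • x) = t ^ 2 * qf A x := by
  simp [qf, mulVec_smul, smul_dotProduct, dotProduct_smul, smul_eq_mul]; ring

lemma qf_nonneg {n : ℕ} {A : Matrix (Fin n) (Fin n) ℝ} (hA : A.PosSemidef) (x : Fin n → ℝ) :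
    0 ≤ qf A x := by simpa [qf] using hA.dotProduct_mulVec_nonneg x

/-- Rayleigh-type lower bound from a lower bound on the eigenvalues. -/
lemma rayleigh_aux {n : ℕ} {A : Matrix (Fin n) (Fin n) ℝ} (hA : A.IsHermitian)
    (c : ℝ) (hc : ∀ i, c ≤ hA.eigenvalues i) (v : Fin n → ℝ) :
    c * sqnorm v ≤ qf A v := by
  classical
  set U : Matrix (Fin n) (Fin n) ℝ := (hA.eigenvectorUnitary : Matrix (Fin n) (Fin n) ℝ) with hU
  have hstar : star U = Uᵀ := by
    rw [Matrix.star_eq_conjTranspose, Matrix.conjTranspose_eq_transpose_of_trivial]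
  have hUU : U * Uᵀ = 1 := by
    rw [← hstar]; exact (Matrix.mem_unitaryGroup_iff).mp hA.eigenvectorUnitary.2
  set w : Fin n → ℝ := Uᵀ *ᵥ v with hw
  have hdiag : Matrix.diagonal (RCLike.ofReal ∘ hA.eigenvalues)
      = Matrix.diagonal hA.eigenvalues := by
    norm_num [Function.comp]
  have hqf : qf A v = ∑ i, hA.eigenvalues i * (w i * w i) := by
    have hspec := hA.spectral_theorem
    rw [Unitary.conjStarAlgAut_apply] at hspec
    rw [qf]
    conv_lhs => rw [hspec]
    rw [hstar, hdiag, ← Matrix.mulVec_mulVec, ← Matrix.mulVec_mulVec,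
      Matrix.dotProduct_mulVec, ← Matrix.mulVec_transpose]
    simp only [← hw, dotProduct, Matrix.mulVec_diagonal]
    exact Finset.sum_congr rfl fun i _ => by ring
  have hsq : sqnorm v = ∑ i, w i * w i := by
    have h1 : v ⬝ᵥ v = w ⬝ᵥ w := by
      rw [hw, Matrix.dotProduct_mulVec, Matrix.mulVec_transpose,
        Matrix.vecMul_vecMul, hUU]
      simp
    rw [sqnorm_eq_dot, h1, dotProduct]
  rw [hqf, hsq, Finset.mul_sum]
  exact Finset.sum_le_sum fun i _ => mul_le_mul_of_nonneg_right (hc i) (mul_self_nonneg _)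

lemma smallestEigenvalue_spec {n : ℕ} (hn : 1 ≤ n) {A : Matrix (Fin n) (Fin n) ℝ}
    (hA : A.PosDef) :
    0 < smallestEigenvalue A ∧ ∀ v, smallestEigenvalue A * sqnorm v ≤ qf A v := by
  classical
  have hH : A.IsHermitian := hA.1
  have : Nonempty (Fin n) := ⟨⟨0, hn⟩⟩
  obtain ⟨i₀, -, hmin⟩ := Finset.exists_min_image Finset.univ hH.eigenvalues
    ⟨Classical.arbitrary _, Finset.mem_univ _⟩
  set lam := hH.eigenvalues i₀ with hlam
  have hray : ∀ v, lam * sqnorm v ≤ qf A v :=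
    rayleigh_aux hH lam (fun i => hmin i (Finset.mem_univ i))
  set S : Set ℝ := {μ : ℝ | ¬ IsUnit (A - μ • (1 : Matrix (Fin n) (Fin n) ℝ))} with hS
  have hlb : ∀ μ ∈ S, lam ≤ μ := by
    intro μ hμ
    have hdet : (A - μ • (1 : Matrix (Fin n) (Fin n) ℝ)).det = 0 := by
      by_contra hd
      exact hμ ((Matrix.isUnit_iff_isUnit_det _).mpr (isUnit_iff_ne_zero.mpr hd))
    obtain ⟨v, hv0, hv⟩ := (Matrix.exists_mulVec_eq_zero_iff).mpr hdet
    have hAv : A *ᵥ v = μ • v := by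
      have h2 : A *ᵥ v - μ • v = 0 := by
        simpa [Matrix.sub_mulVec, Matrix.smul_mulVec, Matrix.one_mulVec] using hv
      exact sub_eq_zero.mp h2
    have hsqpos : 0 < sqnorm v := by
      rcases Function.ne_iff.mp hv0 with ⟨j, hj⟩
      have : (0:ℝ) < v j ^ 2 := lt_of_le_of_ne (sq_nonneg _) (Ne.symm (pow_ne_zero 2 hj))
      exact Finset.sum_pos' (fun i _ => sq_nonneg _) ⟨j, Finset.mem_univ j, this⟩
    have hqv : qf A v = μ * sqnorm v := by
      rw [qf, hAv, sqnorm_eq_dot, dotProduct_smul]; rfl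
    have := hray v
    rw [hqv] at this
    exact le_of_mul_le_mul_right (by linarith) hsqpos
  set e : Fin n → ℝ := ⇑(hH.eigenvectorBasis i₀) with he
  have hne : e ≠ 0 := by
    intro h
    apply hH.eigenvectorBasis.orthonormal.ne_zero i₀
    ext j
    exact congrFun h j
  have hAe : A *ᵥ e = lam • e := hH.mulVec_eigenvectorBasis i₀
  have hmem : lam ∈ S := by
    intro hunit
    have h0 : (A - lam • (1 : Matrix (Fin n) (Fin n) ℝ)) *ᵥ e = 0 := by
      simp [Matrix.sub_mulVec, Matrix.smul_mulVec, Matrix.one_mulVec, hAe]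
    have hdet : (A - lam • (1 : Matrix (Fin n) (Fin n) ℝ)).det = 0 :=
      (Matrix.exists_mulVec_eq_zero_iff).mp ⟨e, hne, h0⟩
    have := (Matrix.isUnit_iff_isUnit_det _).mp hunit
    rw [hdet] at this
    simp at this
  have hEq : smallestEigenvalue A = lam :=
    le_antisymm (csInf_le ⟨lam, hlb⟩ hmem) (le_csInf ⟨lam, hmem⟩ hlb)
  constructor
  · rw [hEq]; exact hA.eigenvalues_pos i₀
  · intro v; rw [hEq]; exact hray v

/-- Moving `t • X` strictly decreases the distance to any `v` of norm at most `M`,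
when `‖X‖ > M` and `t ‖X‖ = M`. -/
lemma dist_decrease {n : ℕ} (X v : Fin n → ℝ) (t M : ℝ)
    (hXM : M < euclNorm X) (ht : t * euclNorm X = M) (hM0 : 0 ≤ M) (hv : euclNorm v ≤ M) :
    sqnorm (t • X - v) < sqnorm (X - v) := by
  set N := euclNorm X with hN
  have hN0 : 0 < N := lt_of_le_of_lt hM0 hXM
  have ht0 : 0 ≤ t := by
    by_contra h
    push_neg at h
    nlinarith
  have ht1 : t < 1 := by nlinarith
  have hS : N ^ 2 = sqnorm X := enorm_sq X
  have hd : X ⬝ᵥ v ≤ N * M :=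
    (dot_le_enorm_mul_enorm X v).trans (mul_le_mul_of_nonneg_left hv (enorm_nonneg X))
  have key : 0 < (1 - t) * ((1 + t) * sqnorm X - 2 * (X ⬝ᵥ v)) := by
    apply mul_pos (by linarith)
    have htS : t * sqnorm X = M * N := by rw [← hS, pow_two, ← mul_assoc, ht]
    nlinarith [mul_pos hN0 (sub_pos.2 hXM)]
  rw [sqnorm_smul_sub, sqnorm_sub_expand]
  nlinarith [key]

set_option maxHeartbeats 1000000 in
/-- Lemma 1, boundedness of the BCD iterates. -/
theorem bcd_iterates_bounded {n q k : ℕ} (hn : 1 ≤ n) (hq : 2 ≤ q)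
    (A : ℕ → Matrix (Fin n) (Fin n) ℝ)
    (α γ ρ φ : ℝ) (hα : α = 0 ∨ α = 1) (hγ : 0 ≤ γ) (hρ : 0 < ρ) (hφ : 0 < φ)
    (hA0 : (A 0).PosDef) (hA : ∀ i, 1 ≤ i → i ≤ q → (A i).PosSemidef)
    (hk1 : 1 ≤ k) (hkn : k ≤ n)
    (x y z : ℕ → Fin n → ℝ)
    (hy0 : euclNorm (y 0) = 1 ∧ (Function.support (y 0)).ncard ≤ k)
    (hz0 : euclNorm (z 0) ≤ 1)
    (hxmin : ∀ l : ℕ, φ ≤ qf (A 0) (x (l + 1)) ∧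
      ∀ u : Fin n → ℝ, φ ≤ qf (A 0) u →
        qrho q A α γ ρ (x (l + 1)) (y l) (z l) ≤ qrho q A α γ ρ u (y l) (z l))
    (hymin : ∀ l : ℕ,
      (euclNorm (y (l + 1)) = 1 ∧ (Function.support (y (l + 1))).ncard ≤ k) ∧
      ∀ v : Fin n → ℝ, euclNorm v = 1 → (Function.support v).ncard ≤ k →
        qrho q A α γ ρ (x (l + 1)) (y (l + 1)) (z l) ≤ qrho q A α γ ρ (x (l + 1)) v (z l))
    (hzmin : ∀ l : ℕ, ∀ w : Fin n → ℝ,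
        qrho q A α γ ρ (x (l + 1)) (y (l + 1)) (z (l + 1)) ≤
          qrho q A α γ ρ (x (l + 1)) (y (l + 1)) w) :
    ∀ l : ℕ, 1 ≤ l →
      max (max (euclNorm (x l)) (euclNorm (y l))) (euclNorm (z l)) ≤
        max (Real.sqrt (φ / smallestEigenvalue (A 0))) 1 := by
  classical
  obtain ⟨hlam_pos, hray⟩ := smallestEigenvalue_spec hn hA0
  set lam := smallestEigenvalue (A 0) with hlamdef
  set M : ℝ := max (Real.sqrt (φ / lam)) 1 with hMdef
  have hα0 : 0 ≤ α := by rcases hα with h | h <;> rw [h] <;> norm_num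
  have hM1 : (1:ℝ) ≤ M := le_max_right _ _
  have hM0 : (0:ℝ) ≤ M := zero_le_one.trans hM1
  have hMsq : φ ≤ lam * M ^ 2 := by
    have h1 : Real.sqrt (φ / lam) ≤ M := le_max_left _ _
    have h2 : Real.sqrt (φ / lam) ^ 2 = φ / lam :=
      Real.sq_sqrt (div_nonneg hφ.le hlam_pos.le)
    have h3 : φ / lam ≤ M ^ 2 := by
      rw [← h2]
      exact pow_le_pow_left₀ (Real.sqrt_nonneg _) h1 2
    calc φ = lam * (φ / lam) := by field_simp
    _ ≤ lam * M ^ 2 := mul_le_mul_of_nonneg_left h3 hlam_pos.le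
  -- y is always bounded by M
  have hyM : ∀ l, euclNorm (y l) ≤ M := by
    intro l
    cases l with
    | zero => rw [hy0.1]; exact hM1
    | succ m => rw [((hymin m).1).1]; exact hM1
  -- the x-step keeps the iterate bounded
  have key1 : ∀ l, euclNorm (y l) ≤ M → euclNorm (z l) ≤ M → euclNorm (x (l + 1)) ≤ M := by
    intro l hY hZ
    by_contra hcon
    push_neg at hcon
    set X := x (l + 1) with hX
    set N := euclNorm X with hN
    have hN0 : 0 < N := lt_of_le_of_lt hM0 hcon
    set t := M / N with htdef
    have ht : t * N = M := div_mul_cancel₀ _ hN0.ne'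
    have ht0 : 0 ≤ t := div_nonneg hM0 hN0.le
    have ht1 : t < 1 := (div_lt_one hN0).2 hcon
    set u := t • X with hu
    have hsqu : sqnorm u = M ^ 2 := by
      rw [hu, sqnorm_smul, ← enorm_sq X]
      rw [← hN]  -- euclNorm X = N
      nlinarith
    have hufeas : φ ≤ qf (A 0) u := by
      have := hray u
      rw [hsqu] at this
      linarith
    have hmin := (hxmin l).2 u hufeas
    have ht2 : t ^ 2 ≤ 1 := by nlinarith
    have hq1 : qf (A 1) u ≤ qf (A 1) X := by
      rw [hu, qf_smul]
      exact mul_le_of_le_one_left (qf_nonneg (hA 1 le_rfl (le_trans one_le_two hq)) X) ht2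
    have hsum : ∑ i ∈ Finset.Icc 2 q, qf (A i) (z l) * qf (A i) u
        ≤ ∑ i ∈ Finset.Icc 2 q, qf (A i) (z l) * qf (A i) X := by
      apply Finset.sum_le_sum
      intro i hi
      obtain ⟨hi1, hi2⟩ := Finset.mem_Icc.mp hi
      have hpsd := hA i (le_trans one_le_two hi1) hi2
      have h1 := qf_nonneg hpsd X
      have h2 := qf_nonneg hpsd (z l)
      rw [hu, qf_smul]
      exact mul_le_mul_of_nonneg_left (mul_le_of_le_one_left h1 ht2) h2
    have hd1 : sqnorm (u - y l) < sqnorm (X - y l) := dist_decrease X (y l) t M hcon ht hM0 hY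
    have hd2 : sqnorm (u - z l) < sqnorm (X - z l) := dist_decrease X (z l) t M hcon ht hM0 hZ
    have hstrict : qrho q A α γ ρ u (y l) (z l) < qrho q A α γ ρ X (y l) (z l) := by
      unfold qrho
      have e1 : α * qf (A 1) u ≤ α * qf (A 1) X := mul_le_mul_of_nonneg_left hq1 hα0
      have e2 : γ * ∑ i ∈ Finset.Icc 2 q, qf (A i) (z l) * qf (A i) u
          ≤ γ * ∑ i ∈ Finset.Icc 2 q, qf (A i) (z l) * qf (A i) X :=
        mul_le_mul_of_nonneg_left hsum hγ
      have e3 : ρ * (sqnorm (u - y l) + sqnorm (u - z l))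
          < ρ * (sqnorm (X - y l) + sqnorm (X - z l)) :=
        mul_lt_mul_of_pos_left (by linarith) hρ
      linarith
    linarith
  -- the z-step contracts towards x
  have key2 : ∀ l, euclNorm (z (l + 1)) ≤ euclNorm (x (l + 1)) := by
    intro l
    by_contra hcon
    push_neg at hcon
    set X := x (l + 1) with hX
    set Z := z (l + 1) with hZ
    set NZ := euclNorm Z with hNZ
    set NX := euclNorm X with hNX
    have hNZ0 : 0 < NZ := lt_of_le_of_lt (enorm_nonneg X) hcon
    set t := NX / NZ with htdef
    have ht : t * NZ = NX := div_mul_cancel₀ _ hNZ0.ne'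
    have ht0 : 0 ≤ t := div_nonneg (enorm_nonneg X) hNZ0.le
    have ht1 : t < 1 := (div_lt_one hNZ0).2 hcon
    have ht2 : t ^ 2 ≤ 1 := by nlinarith
    set w := t • Z with hw
    have hd : sqnorm (X - w) < sqnorm (X - Z) := by
      rw [sqnorm_sub_comm X w, sqnorm_sub_comm X Z]
      exact dist_decrease Z X t NX hcon ht (enorm_nonneg X) le_rfl
    have hsum : ∑ i ∈ Finset.Icc 2 q, qf (A i) w * qf (A i) X
        ≤ ∑ i ∈ Finset.Icc 2 q, qf (A i) Z * qf (A i) X := by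
      apply Finset.sum_le_sum
      intro i hi
      obtain ⟨hi1, hi2⟩ := Finset.mem_Icc.mp hi
      have hpsd := hA i (le_trans one_le_two hi1) hi2
      have h1 := qf_nonneg hpsd X
      have h2 := qf_nonneg hpsd Z
      rw [hw, qf_smul]
      exact mul_le_mul_of_nonneg_right (mul_le_of_le_one_left h2 ht2) h1
    have hmin := hzmin l w
    have hstrict : qrho q A α γ ρ X (y (l + 1)) w < qrho q A α γ ρ X (y (l + 1)) Z := by
      unfold qrho
      have e2 : γ * ∑ i ∈ Finset.Icc 2 q, qf (A i) w * qf (A i) X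
          ≤ γ * ∑ i ∈ Finset.Icc 2 q, qf (A i) Z * qf (A i) X :=
        mul_le_mul_of_nonneg_left hsum hγ
      have e3 : ρ * (sqnorm (X - y (l + 1)) + sqnorm (X - w))
          < ρ * (sqnorm (X - y (l + 1)) + sqnorm (X - Z)) :=
        mul_lt_mul_of_pos_left (by linarith) hρ
      linarith
    linarith
  -- z is always bounded by M
  have hzM : ∀ l, euclNorm (z l) ≤ M := by
    intro l
    induction l with
    | zero => exact hz0.trans hM1
    | succ m ih => exact (key2 m).trans (key1 m (hyM m) ih)
  intro l hl
  obtain ⟨m, rfl⟩ : ∃ m, l = m + 1 := ⟨l - 1, by omega⟩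
  exact max_le (max_le (key1 m (hyM m) (hzM m)) (hyM (m + 1))) (hzM (m + 1))
end

section
/- Let x ∈ ℝ^n with x ≠ 0, let 1 ≤ k ≤ n, and let L ⊆ {1,…,n} with |L| = k be such that min_{i∈L} |x_i| ≥ max_{i∉L} |x_i| (i.e., L indexes k coordinates of x that are largest in absolute value). Then x_L ≠ 0 and y* = x_L / ‖x_L‖ is a global minimizer of the function y ↦ ‖x − y‖² over the set {y ∈ ℝ^n : ‖y‖ = 1 and ‖y‖₀ ≤ k}. -/
open Matrix Finset Filter Topology

/-- Euclidean norm on `ℝ^n`. -/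
noncomputable def enorm {n : ℕ} (x : Fin n → ℝ) : ℝ := Real.sqrt (sqnorm x)

lemma sq_enorm {n : ℕ} (x : Fin n → ℝ) : _root_.enorm x ^ 2 = sqnorm x :=
  Real.sq_sqrt (sqnorm_nonneg x)

lemma sqnorm_sub {n : ℕ} (x y : Fin n → ℝ) :
    sqnorm (x - y) = sqnorm x - 2 * ∑ i, x i * y i + sqnorm y := by
  simp only [sqnorm, Pi.sub_apply, sub_sq, Finset.sum_add_distrib, Finset.sum_sub_distrib,
    Finset.mul_sum]
  ring_nf

lemma sqnorm_proj {n : ℕ} (L : Finset (Fin n)) (x : Fin n → ℝ) :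
    sqnorm (proj L x) = ∑ i ∈ L, x i ^ 2 := by
  simp only [sqnorm, proj, apply_ite (· ^ 2), ne_eq, OfNat.ofNat_ne_zero,
    not_false_eq_true, zero_pow, Finset.sum_ite_mem, Finset.univ_inter]

lemma key_sum_le {n : ℕ} (x : Fin n → ℝ) (L S : Finset (Fin n)) (hLne : L.Nonempty)
    (hcard : S.card ≤ L.card)
    (hsep : ∀ i ∈ L, ∀ j ∉ L, |x j| ≤ |x i|) :
    ∑ i ∈ S, x i ^ 2 ≤ ∑ i ∈ L, x i ^ 2 := by
  rw [← Finset.sum_inter_add_sum_sdiff S L (fun i => x i ^ 2),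
      ← Finset.sum_inter_add_sum_sdiff L S (fun i => x i ^ 2), Finset.inter_comm]
  refine add_le_add_right ?_ _
  obtain ⟨i₀, hi₀L, hi₀⟩ := Finset.exists_mem_eq_inf' hLne (fun i => x i ^ 2)
  set m : ℝ := x i₀ ^ 2 with hm
  have hmnn : 0 ≤ m := sq_nonneg _
  have h1 : ∑ j ∈ S \ L, x j ^ 2 ≤ (S \ L).card • m := by
    refine Finset.sum_le_card_nsmul _ _ _ fun j hj => ?_
    have hjL : j ∉ L := (Finset.mem_sdiff.1 hj).2
    calc x j ^ 2 = |x j| ^ 2 := (sq_abs _).symm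
      _ ≤ |x i₀| ^ 2 := by
          exact pow_le_pow_left₀ (abs_nonneg _) (hsep i₀ hi₀L j hjL) 2
      _ = x i₀ ^ 2 := sq_abs _
  have hc : (S \ L).card ≤ (L \ S).card := by
    have h2 := Finset.card_sdiff_add_card_inter S L
    have h3 := Finset.card_sdiff_add_card_inter L S
    rw [Finset.inter_comm] at h3
    omega
  have h4 : ((S \ L).card : ℝ) • m ≤ ((L \ S).card : ℝ) • m := by
    simp only [smul_eq_mul]
    exact mul_le_mul_of_nonneg_right (by exact_mod_cast hc) hmnn
  have h5 : (L \ S).card • m ≤ ∑ i ∈ L \ S, x i ^ 2 := by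
    refine Finset.card_nsmul_le_sum _ _ _ fun i hi => ?_
    calc m = L.inf' hLne (fun i => x i ^ 2) := hi₀.symm
      _ ≤ x i ^ 2 := Finset.inf'_le _ (Finset.mem_sdiff.1 hi).1
  calc ∑ j ∈ S \ L, x j ^ 2 ≤ (S \ L).card • m := h1
    _ = ((S \ L).card : ℝ) • m := by simp
    _ ≤ ((L \ S).card : ℝ) • m := h4
    _ = (L \ S).card • m := by simp
    _ ≤ _ := h5

theorem sparsify_is_minimizer {n k : ℕ} (hk1 : 1 ≤ k) (hkn : k ≤ n)
    (x : Fin n → ℝ) (hx : x ≠ 0) (L : Finset (Fin n)) (hL : L.card = k)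
    (hsep : ∀ i ∈ L, ∀ j ∉ L, |x j| ≤ |x i|) :
    proj L x ≠ 0 ∧
    (_root_.enorm ((_root_.enorm (proj L x))⁻¹ • proj L x) = 1 ∧
      (Function.support ((_root_.enorm (proj L x))⁻¹ • proj L x)).ncard ≤ k) ∧
    ∀ y : Fin n → ℝ, _root_.enorm y = 1 → (Function.support y).ncard ≤ k →
      sqnorm (x - (_root_.enorm (proj L x))⁻¹ • proj L x) ≤ sqnorm (x - y) := by
  classical
  have hLne : L.Nonempty := Finset.card_pos.1 (by omega)
  have hproj : proj L x ≠ 0 := by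
    obtain ⟨j, hj⟩ : ∃ j, x j ≠ 0 := Function.ne_iff.1 hx
    obtain ⟨i, hiL⟩ := hLne
    intro h
    have hxi : x i = 0 := by have := congrFun h i; simpa [proj, hiL] using this
    by_cases hjL : j ∈ L
    · exact hj (by have := congrFun h j; simpa [proj, hjL] using this)
    · have h2 : |x j| ≤ 0 := by simpa [hxi] using hsep i hiL j hjL
      exact hj (abs_eq_zero.1 (le_antisymm h2 (abs_nonneg _)))
  set c := _root_.enorm (proj L x) with hc
  have hsqc : sqnorm (proj L x) = ∑ i ∈ L, x i ^ 2 := sqnorm_proj L x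
  have hsq_pos : 0 < sqnorm (proj L x) := by
    rcases (sqnorm_nonneg (proj L x)).lt_or_eq with h | h
    · exact h
    · exfalso; apply hproj
      funext i
      have := (Finset.sum_eq_zero_iff_of_nonneg (fun i _ => sq_nonneg (proj L x i))).1 h.symm
        i (Finset.mem_univ i)
      exact pow_eq_zero_iff two_ne_zero |>.1 this
  have hcpos : 0 < c := Real.sqrt_pos.2 hsq_pos
  have hc2 : c ^ 2 = sqnorm (proj L x) := sq_enorm _
  set ys := c⁻¹ • proj L x with hys
  have hys_sq : sqnorm ys = 1 := by
    have : sqnorm ys = c⁻¹ ^ 2 * sqnorm (proj L x) := by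
      simp only [hys, sqnorm, Pi.smul_apply, smul_eq_mul, mul_pow, ← Finset.mul_sum]
    rw [this, ← hc2]
    field_simp
  have hys_norm : _root_.enorm ys = 1 := by rw [_root_.enorm, hys_sq, Real.sqrt_one]
  have hys_supp : (Function.support ys).ncard ≤ k := by
    have hsub : Function.support ys ⊆ ↑L := by
      intro i hi
      by_contra hiL
      have hiL' : i ∉ L := fun h => hiL (Finset.mem_coe.mpr h)
      exact hi (by simp [hys, Pi.smul_apply, proj, hiL'])
    calc (Function.support ys).ncard ≤ (↑L : Set (Fin n)).ncard :=
          Set.ncard_le_ncard hsub L.finite_toSet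
      _ = L.card := Set.ncard_coe_finset L
      _ = k := hL
  have hinner_ys : ∑ i, x i * ys i = c := by
    have h1 : ∑ i, x i * proj L x i = sqnorm (proj L x) := by
      rw [sqnorm]
      refine Finset.sum_congr rfl fun i _ => ?_
      simp only [proj]; split <;> ring
    have : ∑ i, x i * ys i = c⁻¹ * ∑ i, x i * proj L x i := by
      simp only [hys, Pi.smul_apply, smul_eq_mul]
      rw [Finset.mul_sum]
      exact Finset.sum_congr rfl fun i _ => by ring
    rw [this, h1, ← hc2]
    field_simp [pow_two]
  refine ⟨hproj, ⟨hys_norm, hys_supp⟩, ?_⟩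
  intro y hy1 hysupp
  have hy_sq : sqnorm y = 1 := by
    have h := sq_enorm y
    rw [hy1] at h; simpa using h.symm
  set S := (Function.support y).toFinset with hS
  have hScard : S.card ≤ k := by
    rw [hS, ← Set.ncard_eq_toFinset_card']; exact hysupp
  have hyS : ∀ i ∉ S, y i = 0 := fun i hi => by
    simpa [hS, Set.mem_toFinset, Function.mem_support, not_not] using hi
  have hsum_y : ∑ i ∈ S, y i ^ 2 = 1 := by
    rw [← hy_sq, sqnorm]
    exact Finset.sum_subset (Finset.subset_univ _)
      (fun i _ hi => by rw [hyS i hi]; ring)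
  have hsum_xy : ∑ i, x i * y i = ∑ i ∈ S, x i * y i :=
    (Finset.sum_subset (Finset.subset_univ _) fun i _ hi => by rw [hyS i hi, mul_zero]).symm
  have hkey : ∑ i ∈ S, x i ^ 2 ≤ ∑ i ∈ L, x i ^ 2 :=
    key_sum_le x L S hLne (by omega) hsep
  have hCS : (∑ i ∈ S, x i * y i) ^ 2 ≤ c ^ 2 := by
    calc (∑ i ∈ S, x i * y i) ^ 2 ≤ (∑ i ∈ S, x i ^ 2) * ∑ i ∈ S, y i ^ 2 :=
          Finset.sum_mul_sq_le_sq_mul_sq S _ _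
      _ = ∑ i ∈ S, x i ^ 2 := by rw [hsum_y, mul_one]
      _ ≤ ∑ i ∈ L, x i ^ 2 := hkey
      _ = c ^ 2 := by rw [hc2, hsqc]
  have hinner_le : ∑ i, x i * y i ≤ c := by
    rw [hsum_xy]
    calc ∑ i ∈ S, x i * y i ≤ |∑ i ∈ S, x i * y i| := le_abs_self _
      _ = Real.sqrt ((∑ i ∈ S, x i * y i) ^ 2) := (Real.sqrt_sq_eq_abs _).symm
      _ ≤ Real.sqrt (c ^ 2) := Real.sqrt_le_sqrt hCS
      _ = c := Real.sqrt_sq hcpos.le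
  rw [sqnorm_sub, sqnorm_sub, hys_sq, hy_sq, hinner_ys]
  linarith
end

section
/- Let (x_l, y_l, z_l)_{l ≥ 0} be a BCD sequence. If q_ρ(x_r, y_r, z_r) = q_ρ(x_{r+1}, y_{r+1}, z_{r+1}) for some r ≥ 1, then (x_r, y_r, z_r) is a saddle point, i.e., x_r minimizes q_ρ(·, y_r, z_r) over X, y_r minimizes q_ρ(x_r, ·, z_r) over Y, and z_r minimizes q_ρ(x_r, y_r, ·) over ℝ^n. -/
open Matrix Finset Filter Topology

/-- Euclidean norm on `ℝ^n`. -/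
noncomputable def eucNorm {n : ℕ} (x : Fin n → ℝ) : ℝ := Real.sqrt (sqnorm x)

/-- The `y`-comparison in `qrho` does not depend on the `z`-argument. -/
lemma qrho_y_transfer {n : ℕ} (q : ℕ) (A : ℕ → Matrix (Fin n) (Fin n) ℝ)
    (α γ ρ : ℝ) (x yy v z z' : Fin n → ℝ)
    (h : qrho q A α γ ρ x yy z' ≤ qrho q A α γ ρ x v z') :
    qrho q A α γ ρ x yy z ≤ qrho q A α γ ρ x v z := by
  simp only [qrho, mul_add] at h ⊢
  linarith

theorem bcd_equal_values_saddle {n q k : ℕ} (hn : 1 ≤ n) (hq : 2 ≤ q)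
    (A : ℕ → Matrix (Fin n) (Fin n) ℝ)
    (α γ ρ φ : ℝ) (hα : α = 0 ∨ α = 1) (hγ : 0 ≤ γ) (hρ : 0 < ρ) (hφ : 0 < φ)
    (hA0 : (A 0).PosDef)
    (hk1 : 1 ≤ k) (hkn : k ≤ n)
    (x y z : ℕ → Fin n → ℝ)
    (hy0 : eucNorm (y 0) = 1 ∧ (Function.support (y 0)).ncard ≤ k)
    (hxmin : ∀ l : ℕ, φ ≤ qf (A 0) (x (l + 1)) ∧
      ∀ u : Fin n → ℝ, φ ≤ qf (A 0) u →
        qrho q A α γ ρ (x (l + 1)) (y l) (z l) ≤ qrho q A α γ ρ u (y l) (z l))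
    (hymin : ∀ l : ℕ,
      (eucNorm (y (l + 1)) = 1 ∧ (Function.support (y (l + 1))).ncard ≤ k) ∧
      ∀ v : Fin n → ℝ, eucNorm v = 1 → (Function.support v).ncard ≤ k →
        qrho q A α γ ρ (x (l + 1)) (y (l + 1)) (z l) ≤ qrho q A α γ ρ (x (l + 1)) v (z l))
    (hzmin : ∀ l : ℕ, ∀ w : Fin n → ℝ,
        qrho q A α γ ρ (x (l + 1)) (y (l + 1)) (z (l + 1)) ≤
          qrho q A α γ ρ (x (l + 1)) (y (l + 1)) w)
    (hAsymm : ∀ i, 1 ≤ i → i ≤ q → (A i).IsHermitian)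
    (r : ℕ) (hr : 1 ≤ r)
    (heq : qrho q A α γ ρ (x r) (y r) (z r) =
      qrho q A α γ ρ (x (r + 1)) (y (r + 1)) (z (r + 1))) :
    (φ ≤ qf (A 0) (x r) ∧
      ∀ u : Fin n → ℝ, φ ≤ qf (A 0) u →
        qrho q A α γ ρ (x r) (y r) (z r) ≤ qrho q A α γ ρ u (y r) (z r)) ∧
    ((eucNorm (y r) = 1 ∧ (Function.support (y r)).ncard ≤ k) ∧
      ∀ v : Fin n → ℝ, eucNorm v = 1 → (Function.support v).ncard ≤ k →
        qrho q A α γ ρ (x r) (y r) (z r) ≤ qrho q A α γ ρ (x r) v (z r)) ∧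
    (∀ w : Fin n → ℝ,
      qrho q A α γ ρ (x r) (y r) (z r) ≤ qrho q A α γ ρ (x r) (y r) w) := by
  obtain ⟨m, rfl⟩ : ∃ m, r = m + 1 := ⟨r - 1, (Nat.succ_pred_eq_of_pos hr).symm⟩
  set r := m + 1 with hrdef
  have hfeas : φ ≤ qf (A 0) (x r) := (hxmin m).1
  have hymem : eucNorm (y r) = 1 ∧ (Function.support (y r)).ncard ≤ k := (hymin m).1
  -- chain of inequalities
  have h1 : qrho q A α γ ρ (x (r + 1)) (y (r + 1)) (z (r + 1)) ≤
      qrho q A α γ ρ (x (r + 1)) (y (r + 1)) (z r) := hzmin r (z r)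
  have h2 : qrho q A α γ ρ (x (r + 1)) (y (r + 1)) (z r) ≤
      qrho q A α γ ρ (x (r + 1)) (y r) (z r) := (hymin r).2 (y r) hymem.1 hymem.2
  have h3 : qrho q A α γ ρ (x (r + 1)) (y r) (z r) ≤
      qrho q A α γ ρ (x r) (y r) (z r) := (hxmin r).2 (x r) hfeas
  have hkey : qrho q A α γ ρ (x r) (y r) (z r) = qrho q A α γ ρ (x (r + 1)) (y r) (z r) := by
    linarith
  refine ⟨⟨hfeas, fun u hu => ?_⟩, ⟨hymem, fun v hv1 hv2 => ?_⟩, fun w => hzmin m w⟩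
  · rw [hkey]; exact (hxmin r).2 u hu
  · exact qrho_y_transfer q A α γ ρ (x r) (y r) v (z r) (z m) ((hymin m).2 v hv1 hv2)
end

section
/- Let A₀ be any real n×n matrix, x* ∈ ℝ^n, and L ⊆ {1,…,n} such that x*_L ≠ 0 and x*_i = 0 for all i ∉ L. Then the map from ℝ^n × ℝ to ℝ × ℝ × ℝ^{Lᶜ} sending (d, v) to (−2 dᵀA₀x* − v, 2 dᵀx*, (d_i)_{i∉L}) is surjective; i.e., Robinson's condition in the inactive case (case (i)) holds at x*. -/
open Matrix Finset Filter Topology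

/-- Robinson's condition, inactive case, always holds. -/
theorem robinson_inactive_always_holds {n : ℕ} (A : Matrix (Fin n) (Fin n) ℝ)
    (xs : Fin n → ℝ) (L : Finset (Fin n))
    (hLne : proj L xs ≠ 0) (hzero : ∀ i ∉ L, xs i = 0) :
    ∀ (a b : ℝ) (c : {i : Fin n // i ∉ L} → ℝ),
      ∃ (d : Fin n → ℝ) (v : ℝ),
        -2 * (d ⬝ᵥ A.mulVec xs) - v = a ∧
        2 * (d ⬝ᵥ xs) = b ∧
        ∀ (i : Fin n) (hi : i ∉ L), d i = c ⟨i, hi⟩ := by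
  intro a b c
  set S : ℝ := ∑ i ∈ L, xs i ^ 2 with hS
  have hSpos : 0 < S := by
    have : ∃ j, proj L xs j ≠ 0 := by
      by_contra h
      push_neg at h
      exact hLne (funext h)
    obtain ⟨j, hj⟩ := this
    have hjL : j ∈ L := by
      by_contra hjL
      simp [proj, hjL] at hj
    have hxj : xs j ≠ 0 := by simpa [proj, hjL] using hj
    refine Finset.sum_pos' (fun i _ => sq_nonneg _) ⟨j, hjL, ?_⟩
    positivity
  set d : Fin n → ℝ := fun i => if h : i ∈ L then b / (2 * S) * xs i else c ⟨i, h⟩ with hd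
  have hdot : d ⬝ᵥ xs = b / 2 := by
    have : ∀ i, d i * xs i = if i ∈ L then b / (2 * S) * xs i ^ 2 else 0 := by
      intro i
      by_cases h : i ∈ L
      · simp [hd, h]; ring
      · simp [hd, h, hzero i h]
    calc d ⬝ᵥ xs = ∑ i, d i * xs i := rfl
      _ = ∑ i, if i ∈ L then b / (2 * S) * xs i ^ 2 else 0 := by
          exact Finset.sum_congr rfl fun i _ => this i
      _ = ∑ i ∈ L, b / (2 * S) * xs i ^ 2 := by rw [Finset.sum_ite_mem]; simp
      _ = b / (2 * S) * S := by rw [← Finset.mul_sum]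
      _ = b / 2 := by field_simp
  refine ⟨d, -2 * (d ⬝ᵥ A.mulVec xs) - a, by ring, by rw [hdot]; ring, ?_⟩
  intro i hi
  simp [hd, hi]
end

section
/- Let A₀ be a real n×n matrix, L ⊆ {1,…,n}, and x* ∈ ℝ^n with ‖x*‖ = 1 and x*_i = 0 for all i ∉ L. Then the following are equivalent: (1) for every (a, b, c) ∈ ℝ × ℝ × ℝ^{Lᶜ} there exist d ∈ ℝ^n and v ≤ 0 such that −2 dᵀA₀x* − v = a, 2 dᵀx* = b, and d_i = c_i for all i ∉ L (Robinson's condition in the active case, case (ii)); (2) the set {(A₀x*)_L, x*_L} is linearly independent in ℝ^n. -/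
open Matrix Finset Filter Topology

/-- Robinson's condition, active case, iff linear independence. -/
theorem robinson_active_iff_linearIndependent {n : ℕ}
    (A : Matrix (Fin n) (Fin n) ℝ) (L : Finset (Fin n)) (xs : Fin n → ℝ)
    (hnorm : eucNorm xs = 1) (hzero : ∀ i ∉ L, xs i = 0) :
    (∀ (a b : ℝ) (c : {i : Fin n // i ∉ L} → ℝ),
      ∃ (d : Fin n → ℝ) (v : ℝ), v ≤ 0 ∧
        -2 * (d ⬝ᵥ A.mulVec xs) - v = a ∧
        2 * (d ⬝ᵥ xs) = b ∧
        ∀ (i : Fin n) (hi : i ∉ L), d i = c ⟨i, hi⟩) ↔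
    LinearIndependent ℝ ![proj L (A.mulVec xs), proj L xs] := by

  classical
  have hw : proj L xs = xs := by
    funext i
    simp only [proj]
    split
    · rfl
    · next h => exact (hzero i h).symm
  have hxs : xs ≠ 0 := by
    intro h
    rw [h] at hnorm
    simp [eucNorm, sqnorm] at hnorm
  rw [hw]
  set u : Fin n → ℝ := proj L (A.mulVec xs) with hu
  have hproj_dot : ∀ y z : Fin n → ℝ, proj L y ⬝ᵥ z = proj L y ⬝ᵥ proj L z := by
    intro y z
    unfold dotProduct
    apply Finset.sum_congr rfl
    intro i _
    by_cases h : i ∈ L <;> simp [proj, h]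
  have hdot0 : ∀ d y : Fin n → ℝ, (∀ i ∉ L, d i = 0) → d ⬝ᵥ y = d ⬝ᵥ proj L y := by
    intro d y hd
    unfold dotProduct
    apply Finset.sum_congr rfl
    intro i _
    by_cases h : i ∈ L <;> simp [proj, h, hd i]
  have huA : u ⬝ᵥ A.mulVec xs = u ⬝ᵥ u := hproj_dot _ _
  have hxA : xs ⬝ᵥ A.mulVec xs = xs ⬝ᵥ u := by
    conv_lhs => rw [← hw]
    rw [hproj_dot, hw]
  have hxu : xs ⬝ᵥ u = u ⬝ᵥ xs := dotProduct_comm _ _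
  constructor
  · -- condition → linear independence
    intro hcond
    by_contra hdep
    rw [LinearIndependent.pair_iff] at hdep
    push_neg at hdep
    obtain ⟨s, t, hst, hne⟩ := hdep
    have hs : s ≠ 0 := by
      intro h0
      rw [h0, zero_smul, zero_add] at hst
      rcases smul_eq_zero.mp hst with ht | hx
      · exact hne h0 ht
      · exact hxs hx
    have huw : u = (-t / s) • xs := by
      funext i
      have := congrFun hst i
      simp only [Pi.add_apply, Pi.smul_apply, smul_eq_mul, Pi.zero_apply] at this ⊢
      field_simp
      linarith
    obtain ⟨d, v, hv, h1, h2, h3⟩ := hcond (-1) 0 0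
    have hd0 : ∀ i ∉ L, d i = 0 := by
      intro i hi
      simpa using h3 i hi
    have hdx : d ⬝ᵥ xs = 0 := by linarith
    have hdA : d ⬝ᵥ A.mulVec xs = 0 := by
      rw [hdot0 d _ hd0, ← hu, huw, dotProduct_smul, smul_eq_mul, hdx, mul_zero]
    rw [hdA] at h1
    simp at h1
    linarith
  · -- linear independence → condition
    intro hli a b c
    set B : ℝ := u ⬝ᵥ xs with hB
    set C : ℝ := xs ⬝ᵥ xs with hC
    set A' : ℝ := u ⬝ᵥ u with hA'
    have hD : A' * C - B ^ 2 ≠ 0 := by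
      intro hD0
      set z : Fin n → ℝ := C • u - B • xs with hz
      have hzz : z ⬝ᵥ z = 0 := by
        have hc : xs ⬝ᵥ u = u ⬝ᵥ xs := dotProduct_comm _ _
        simp only [hz, sub_dotProduct, dotProduct_sub,
          smul_dotProduct, dotProduct_smul, smul_eq_mul, hc, ← hB, ← hC, ← hA']
        linear_combination C * hD0
      have hz0 : z = 0 := dotProduct_self_eq_zero.mp hzz
      have := (LinearIndependent.pair_iff.mp hli) C (-B) (by
        rw [neg_smul, ← sub_eq_add_neg, ← hz, hz0])
      have hC0 : C = 0 := this.1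
      have : xs = 0 := dotProduct_self_eq_zero.mp hC0
      exact hxs this
    set e : Fin n → ℝ := fun i => if h : i ∈ L then 0 else c ⟨i, h⟩ with he
    have hex : e ⬝ᵥ xs = 0 := by
      unfold dotProduct
      apply Finset.sum_eq_zero
      intro i _
      by_cases h : i ∈ L <;> simp [he, h, hzero i]
    set E : ℝ := e ⬝ᵥ A.mulVec xs with hE
    set p : ℝ := -(a + 2 * E) / 2 with hp
    set q : ℝ := b / 2 with hq
    set D : ℝ := A' * C - B ^ 2 with hDdef
    set s : ℝ := (p * C - q * B) / D with hs
    set t : ℝ := (q * A' - p * B) / D with ht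
    refine ⟨s • u + t • xs + e, 0, le_refl 0, ?_, ?_, ?_⟩
    · have : (s • u + t • xs + e) ⬝ᵥ A.mulVec xs = s * A' + t * B + E := by
        simp only [add_dotProduct, smul_dotProduct, smul_eq_mul, huA, hxA, hxu,
          ← hA', ← hB, ← hE]
      rw [this]
      have hsab : s * A' + t * B = p := by
        rw [hs, ht]
        field_simp
        ring
      rw [hsab, hp]
      ring
    · have : (s • u + t • xs + e) ⬝ᵥ xs = s * B + t * C := by
        simp only [add_dotProduct, smul_dotProduct, smul_eq_mul, hex,
          ← hB, ← hC, add_zero]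
      rw [this]
      have hsab : s * B + t * C = q := by
        rw [hs, ht]
        field_simp
        ring
      rw [hsab, hq]
      ring
    · intro i hi
      simp [hu, he, proj, hi, hzero i hi]
end

section
/- Let q ≥ 2, α ∈ {0,1}, γ ≥ 0, φ > 0, 1 ≤ k ≤ n, let A₀ be a real symmetric positive definite n×n matrix, let A₁, …, A_q be real symmetric positive semidefinite n×n matrices, and let L ⊆ {1,…,n} with |L| = k. Let (ρ_j) be positive reals with ρ_j → ∞, and let (x_j), (y_j), (z_j) in ℝ^n and (λ_j) with λ_j ≥ 0 satisfy for every j: (1) α A₁x_j + γ Σ_{i=2}^{q} (z_jᵀA_i z_j) A_i x_j + ρ_j(2x_j − y_j − z_j) = λ_j A₀ x_j; (2) (x_j)_L ≠ 0 and y_j = (x_j)_L / ‖(x_j)_L‖; (3) γ Σ_{i=2}^{q} (x_jᵀA_i x_j) A_i z_j = ρ_j (x_j − z_j); (4) x_jᵀA₀x_j ≥ φ and λ_j (x_jᵀA₀x_j − φ) = 0. Suppose x_j → x*, y_j → x*, z_j → x* with ‖x*‖ = 1 and x*_i = 0 for all i ∉ L, and suppose Robinson's condition holds at x* with index set L: if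 (x*)ᵀA₀x* = φ, for every (a,b,c) ∈ ℝ × ℝ × ℝ^{Lᶜ} there exist d ∈ ℝ^n and v ≤ 0 with −2 dᵀA₀x* − v = a, 2 dᵀx* = b, and d_i = c_i for i ∉ L; if (x*)ᵀA₀x* > φ, the same with v ∈ ℝ arbitrary. Then there exist λ ≥ 0, μ ∈ ℝ, and w ∈ ℝ^n with w_i = 0 for all i ∈ L such that (α A₁ + 2γ Σ_{i=2}^{q} ((x*)ᵀA_i x*) A_i) x* − λ A₀ x* + μ x* + w = 0 and λ((x*)ᵀA₀x* − φ) = 0; i.e., x* is a KKT point of the sparse volatile mean-reverting portfolio problem. -/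
open Matrix Finset Filter Topology

/-- Euclidean norm on `ℝ^n`. -/
noncomputable def enorm₂ {n : ℕ} (x : Fin n → ℝ) : ℝ := Real.sqrt (sqnorm x)

section aux
variable {n : ℕ} {ι : Type*} {l : Filter ι}

/-- Auxiliary: the vector `Σ_{i=2}^q (vᵀA_i v) A_i u`. -/
noncomputable def kktG (A : ℕ → Matrix (Fin n) (Fin n) ℝ) (q : ℕ)
    (v u : Fin n → ℝ) : Fin n → ℝ :=
  ∑ i ∈ Finset.Icc 2 q, qf (A i) v • (A i).mulVec u

lemma aux_sum_mulVec (s : Finset ℕ) (f : ℕ → Matrix (Fin n) (Fin n) ℝ) (u : Fin n → ℝ) :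
    (∑ i ∈ s, f i).mulVec u = ∑ i ∈ s, (f i).mulVec u := by
  ext j
  rw [Finset.sum_apply]
  simp only [Matrix.mulVec, dotProduct, Matrix.sum_apply]
  rw [Finset.sum_comm]
  congr 1; ext a
  rw [← Finset.sum_mul]

lemma kktG_eq (A : ℕ → Matrix (Fin n) (Fin n) ℝ) (q : ℕ) (v u : Fin n → ℝ) :
    (∑ i ∈ Finset.Icc 2 q, qf (A i) v • A i).mulVec u = kktG A q v u := by
  rw [aux_sum_mulVec]
  exact Finset.sum_congr rfl fun i _ => Matrix.smul_mulVec _ _ _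

lemma aux_tendsto_mulVec (M : Matrix (Fin n) (Fin n) ℝ) {u : ι → Fin n → ℝ} {us : Fin n → ℝ}
    (h : Tendsto u l (𝓝 us)) : Tendsto (fun m => M.mulVec (u m)) l (𝓝 (M.mulVec us)) := by
  rw [tendsto_pi_nhds] at h ⊢
  intro i
  simpa [Matrix.mulVec, dotProduct] using
    tendsto_finset_sum _ (fun j _ => (tendsto_const_nhds.mul (h j)))

lemma aux_tendsto_qf (M : Matrix (Fin n) (Fin n) ℝ) {u : ι → Fin n → ℝ} {us : Fin n → ℝ}
    (h : Tendsto u l (𝓝 us)) : Tendsto (fun m => qf M (u m)) l (𝓝 (qf M us)) := by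
  have h' := aux_tendsto_mulVec M h
  simp only [qf, dotProduct]
  exact tendsto_finset_sum _ fun i _ =>
    (tendsto_pi_nhds.mp h i).mul (tendsto_pi_nhds.mp h' i)

lemma aux_tendsto_G (A : ℕ → Matrix (Fin n) (Fin n) ℝ) (q : ℕ)
    {v u : ι → Fin n → ℝ} {vs us : Fin n → ℝ}
    (hv : Tendsto v l (𝓝 vs)) (hu : Tendsto u l (𝓝 us)) :
    Tendsto (fun m => kktG A q (v m) (u m)) l (𝓝 (kktG A q vs us)) := by
  exact tendsto_finset_sum _ fun i _ =>
    (aux_tendsto_qf (A i) hv).smul (aux_tendsto_mulVec (A i) hu)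

end aux

/-- Theorem 2(ii): the limit point is a KKT point. -/
theorem limit_is_kkt_point {n q k : ℕ} (hq : 2 ≤ q)
    (A : ℕ → Matrix (Fin n) (Fin n) ℝ)
    (α γ φ : ℝ) (hα : α = 0 ∨ α = 1) (hγ : 0 ≤ γ) (hφ : 0 < φ)
    (hk1 : 1 ≤ k) (hkn : k ≤ n)
    (hA0 : (A 0).PosDef) (hApsd : ∀ i, 1 ≤ i → i ≤ q → (A i).PosSemidef)
    (L : Finset (Fin n)) (hL : L.card = k)
    (ρ : ℕ → ℝ) (hρpos : ∀ j, 0 < ρ j)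
    (hρ : Filter.Tendsto ρ Filter.atTop Filter.atTop)
    (x y z : ℕ → Fin n → ℝ) (lam : ℕ → ℝ) (hlam : ∀ j, 0 ≤ lam j)
    (h1 : ∀ j, α • (A 1).mulVec (x j)
        + γ • (∑ i ∈ Finset.Icc 2 q, qf (A i) (z j) • A i).mulVec (x j)
        + ρ j • ((2 : ℝ) • x j - y j - z j)
      = lam j • (A 0).mulVec (x j))
    (h2 : ∀ j, proj L (x j) ≠ 0 ∧ y j = (enorm₂ (proj L (x j)))⁻¹ • proj L (x j))
    (h3 : ∀ j, γ • (∑ i ∈ Finset.Icc 2 q, qf (A i) (x j) • A i).mulVec (z j)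
      = ρ j • (x j - z j))
    (h4 : ∀ j, φ ≤ qf (A 0) (x j) ∧ lam j * (qf (A 0) (x j) - φ) = 0)
    (xs : Fin n → ℝ)
    (hxs : Filter.Tendsto x Filter.atTop (𝓝 xs))
    (hys : Filter.Tendsto y Filter.atTop (𝓝 xs))
    (hzs : Filter.Tendsto z Filter.atTop (𝓝 xs))
    (hnorm : enorm₂ xs = 1) (hzero : ∀ i ∉ L, xs i = 0)
    (hRobActive : qf (A 0) xs = φ →
      ∀ (a b : ℝ) (c : {i : Fin n // i ∉ L} → ℝ),
        ∃ (d : Fin n → ℝ) (v : ℝ), v ≤ 0 ∧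
          -2 * (d ⬝ᵥ (A 0).mulVec xs) - v = a ∧
          2 * (d ⬝ᵥ xs) = b ∧
          ∀ (i : Fin n) (hi : i ∉ L), d i = c ⟨i, hi⟩)
    (hRobInactive : φ < qf (A 0) xs →
      ∀ (a b : ℝ) (c : {i : Fin n // i ∉ L} → ℝ),
        ∃ (d : Fin n → ℝ) (v : ℝ),
          -2 * (d ⬝ᵥ (A 0).mulVec xs) - v = a ∧
          2 * (d ⬝ᵥ xs) = b ∧
          ∀ (i : Fin n) (hi : i ∉ L), d i = c ⟨i, hi⟩) :
    ∃ (lams mus : ℝ) (w : Fin n → ℝ), 0 ≤ lams ∧ (∀ i ∈ L, w i = 0) ∧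
      α • (A 1).mulVec xs
          + (2 * γ) • (∑ i ∈ Finset.Icc 2 q, qf (A i) xs • A i).mulVec xs
          - lams • (A 0).mulVec xs + mus • xs + w = 0 ∧
      lams * (qf (A 0) xs - φ) = 0 := by
  -- a nonzero coordinate of xs, necessarily in L
  have hx0 : ∃ i₀, xs i₀ ≠ 0 := by
    by_contra h
    push_neg at h
    have h10 : (1 : ℝ) = 0 := by rw [← hnorm]; simp [enorm₂, sqnorm, h]
    norm_num at h10
  obtain ⟨i₀, hi₀⟩ := hx0
  have hi₀L : i₀ ∈ L := by
    by_contra h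
    exact hi₀ (hzero i₀ h)
  -- the key vector sequence t
  set t : ℕ → Fin n → ℝ := fun j =>
    lam j • (A 0).mulVec (x j) - α • (A 1).mulVec (x j)
      - γ • kktG A q (x j) (z j) - γ • kktG A q (z j) (x j) with ht_def
  have ht : ∀ j, t j = ρ j • (x j - y j) := by
    intro j
    have e1 := h1 j
    have e3 := h3 j
    rw [kktG_eq] at e1 e3
    simp only [ht_def]
    linear_combination (norm := module) -e1 - e3
  -- t j is proportional to x j on L-coordinates
  have key : ∀ j, ∀ i ∈ L, ∀ i' ∈ L, t j i * x j i' = t j i' * x j i := by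
    intro j i hi i' hi'
    have hyy : ∀ i'' ∈ L, y j i'' = (enorm₂ (proj L (x j)))⁻¹ * x j i'' := by
      intro i'' hi''
      rw [(h2 j).2]
      simp [proj, hi'']
    have e := ht j
    have gi : t j i = ρ j * (x j i - (enorm₂ (proj L (x j)))⁻¹ * x j i) := by
      rw [e]; simp [hyy i hi]
    have gi' : t j i' = ρ j * (x j i' - (enorm₂ (proj L (x j)))⁻¹ * x j i') := by
      rw [e]; simp [hyy i' hi']
    rw [gi, gi']; ring
  by_cases hb : BddAbove (Set.range lam)
  · -- bounded multipliers: extract convergent subsequence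
    obtain ⟨M, hM⟩ := hb
    have hmem : ∀ j, lam j ∈ Set.Icc (0 : ℝ) M := fun j => ⟨hlam j, hM ⟨j, rfl⟩⟩
    obtain ⟨ls, -, g, hg, hlamg⟩ :=
      tendsto_subseq_of_bounded (Metric.isBounded_Icc (0:ℝ) M) hmem
    have hgtop : Tendsto g atTop atTop := hg.tendsto_atTop
    have hx' : Tendsto (fun m => x (g m)) atTop (𝓝 xs) := hxs.comp hgtop
    have hz' : Tendsto (fun m => z (g m)) atTop (𝓝 xs) := hzs.comp hgtop
    have hlamg' : Tendsto (fun m => lam (g m)) atTop (𝓝 ls) := hlamg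
    have hls : 0 ≤ ls := ge_of_tendsto hlamg' (Filter.Eventually.of_forall fun m => hlam (g m))
    set ts : Fin n → ℝ :=
      ls • (A 0).mulVec xs - α • (A 1).mulVec xs
        - γ • kktG A q xs xs - γ • kktG A q xs xs with hts_def
    have hconst : ∀ c : ℝ, Tendsto (fun _ : ℕ => c) atTop (𝓝 c) := fun c => tendsto_const_nhds
    have hts : Tendsto (fun m => t (g m)) atTop (𝓝 ts) := by
      have H := (((hlamg'.smul (aux_tendsto_mulVec (A 0) hx')).sub
        ((hconst α).smul (aux_tendsto_mulVec (A 1) hx'))).sub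
        ((hconst γ).smul (aux_tendsto_G A q hx' hz'))).sub
        ((hconst γ).smul (aux_tendsto_G A q hz' hx'))
      exact H.congr (fun m => by simp only [ht_def])
    have keylim : ∀ i ∈ L, ∀ i' ∈ L, ts i * xs i' = ts i' * xs i := by
      intro i hi i' hi'
      have l1 : Tendsto (fun m => t (g m) i * x (g m) i') atTop (𝓝 (ts i * xs i')) :=
        (tendsto_pi_nhds.mp hts i).mul (tendsto_pi_nhds.mp hx' i')
      have l2 : Tendsto (fun m => t (g m) i * x (g m) i') atTop (𝓝 (ts i' * xs i)) := by
        have base := (tendsto_pi_nhds.mp hts i').mul (tendsto_pi_nhds.mp hx' i)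
        exact base.congr (fun m => (key (g m) i hi i' hi').symm)
      exact tendsto_nhds_unique l1 l2
    refine ⟨ls, ts i₀ / xs i₀, fun i => ts i - ts i₀ / xs i₀ * xs i, hls, ?_, ?_, ?_⟩
    · intro i hi
      have hk := keylim i hi i₀ hi₀L
      field_simp
      linarith
    · rw [kktG_eq]
      funext i
      simp only [hts_def, Pi.add_apply, Pi.sub_apply, Pi.smul_apply, Pi.zero_apply,
        smul_eq_mul]
      ring
    · have c1 : Tendsto (fun m => lam (g m) * (qf (A 0) (x (g m)) - φ)) atTop
          (𝓝 (ls * (qf (A 0) xs - φ))) :=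
        hlamg'.mul ((aux_tendsto_qf (A 0) hx').sub tendsto_const_nhds)
      have c2 : Tendsto (fun m => lam (g m) * (qf (A 0) (x (g m)) - φ)) atTop (𝓝 (0:ℝ)) := by
        have : (fun m => lam (g m) * (qf (A 0) (x (g m)) - φ)) = fun _ => (0:ℝ) := by
          funext m; exact (h4 (g m)).2
        rw [this]; exact tendsto_const_nhds
      exact tendsto_nhds_unique c1 c2
  · -- unbounded multipliers: contradiction with Robinson's condition
    exfalso
    rw [not_bddAbove_iff] at hb
    have hgex : ∀ m : ℕ, ∃ j, (m : ℝ) + ∑ j' ∈ Finset.range m, lam j' < lam j := by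
      intro m
      obtain ⟨yv, ⟨j, rfl⟩, hy⟩ := hb ((m : ℝ) + ∑ j' ∈ Finset.range m, lam j')
      exact ⟨j, hy⟩
    choose g hgspec using hgex
    have hge : ∀ m, m ≤ g m := by
      intro m
      by_contra h
      push_neg at h
      have hle : lam (g m) ≤ ∑ j' ∈ Finset.range m, lam j' :=
        Finset.single_le_sum (fun j _ => hlam j) (Finset.mem_range.mpr h)
      have hmn : (0 : ℝ) ≤ (m : ℝ) := Nat.cast_nonneg m
      have := hgspec m
      linarith
    have hgtop : Tendsto g atTop atTop :=
      tendsto_atTop_mono hge tendsto_id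
    have hlamg : Tendsto (fun m => lam (g m)) atTop atTop := by
      apply tendsto_atTop_mono (fun m => ?_) tendsto_natCast_atTop_atTop
      have h1' := hgspec m
      have h2' : (0 : ℝ) ≤ ∑ j' ∈ Finset.range m, lam j' :=
        Finset.sum_nonneg fun j _ => hlam j
      linarith
    have hx' : Tendsto (fun m => x (g m)) atTop (𝓝 xs) := hxs.comp hgtop
    have hz' : Tendsto (fun m => z (g m)) atTop (𝓝 xs) := hzs.comp hgtop
    have hinv : Tendsto (fun m => (lam (g m))⁻¹) atTop (𝓝 0) :=
      tendsto_inv_atTop_zero.comp hlamg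
    have hone : ∀ᶠ m in atTop, (lam (g m))⁻¹ * lam (g m) = 1 := by
      filter_upwards [hlamg.eventually_ge_atTop 1] with m hm
      exact inv_mul_cancel₀ (by linarith)
    set u : ℕ → Fin n → ℝ := fun m =>
      ((lam (g m))⁻¹ * lam (g m)) • (A 0).mulVec (x (g m))
        - (lam (g m))⁻¹ • (α • (A 1).mulVec (x (g m)) + γ • kktG A q (x (g m)) (z (g m))
          + γ • kktG A q (z (g m)) (x (g m))) with hu_def
    have hut : ∀ m, u m = (lam (g m))⁻¹ • t (g m) := by
      intro m
      simp only [hu_def, ht_def]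
      module
    have hulim : Tendsto u atTop (𝓝 ((A 0).mulVec xs)) := by
      have l1 : Tendsto (fun m => (lam (g m))⁻¹ * lam (g m)) atTop (𝓝 1) :=
        tendsto_const_nhds.congr' (by filter_upwards [hone] with m hm; exact hm.symm)
      have hconst : ∀ c : ℝ, Tendsto (fun _ : ℕ => c) atTop (𝓝 c) := fun c => tendsto_const_nhds
      have H := (l1.smul (aux_tendsto_mulVec (A 0) hx')).sub
        (hinv.smul ((((hconst α).smul (aux_tendsto_mulVec (A 1) hx')).add
          ((hconst γ).smul (aux_tendsto_G A q hx' hz'))).add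
          ((hconst γ).smul (aux_tendsto_G A q hz' hx'))))
      simpa only [one_smul, zero_smul, sub_zero] using H
    have keylim : ∀ i ∈ L, ∀ i' ∈ L,
        (A 0).mulVec xs i * xs i' = (A 0).mulVec xs i' * xs i := by
      intro i hi i' hi'
      have l1 : Tendsto (fun m => u m i * x (g m) i') atTop
          (𝓝 ((A 0).mulVec xs i * xs i')) :=
        (tendsto_pi_nhds.mp hulim i).mul (tendsto_pi_nhds.mp hx' i')
      have l2 : Tendsto (fun m => u m i * x (g m) i') atTop
          (𝓝 ((A 0).mulVec xs i' * xs i)) := by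
        have base := (tendsto_pi_nhds.mp hulim i').mul (tendsto_pi_nhds.mp hx' i)
        apply base.congr
        intro m
        simp only [hut m, Pi.smul_apply, smul_eq_mul, mul_assoc]
        rw [key (g m) i' hi' i hi]
      exact tendsto_nhds_unique l1 l2
    have hactive : qf (A 0) xs = φ := by
      have hev : ∀ᶠ m in atTop, qf (A 0) (x (g m)) = φ := by
        filter_upwards [hlamg.eventually_ge_atTop 1] with m hm
        have h42 := (h4 (g m)).2
        have hne : lam (g m) ≠ 0 := by linarith
        rcases mul_eq_zero.mp h42 with h | h
        · exact absurd h hne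
        · linarith
      exact tendsto_nhds_unique (aux_tendsto_qf (A 0) hx')
        (tendsto_const_nhds.congr' (by filter_upwards [hev] with m hm; exact hm.symm))
    obtain ⟨d, v, hv, ha, hbb, hc⟩ := hRobActive hactive (-2) 0 (fun _ => 0)
    have hD : 1 ≤ d ⬝ᵥ (A 0).mulVec xs := by linarith
    have hdx : d ⬝ᵥ xs = 0 := by linarith
    have hprop : ∀ i, d i * (A 0).mulVec xs i
        = ((A 0).mulVec xs i₀ / xs i₀) * (d i * xs i) := by
      intro i
      by_cases hi : i ∈ L
      · have hk := keylim i hi i₀ hi₀L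
        have hxi : (A 0).mulVec xs i = (A 0).mulVec xs i₀ / xs i₀ * xs i := by
          field_simp
          linarith
        rw [hxi]; ring
      · have hdi : d i = 0 := hc i hi
        rw [hdi]; ring
    have hsum : d ⬝ᵥ (A 0).mulVec xs = ((A 0).mulVec xs i₀ / xs i₀) * (d ⬝ᵥ xs) := by
      simp only [dotProduct]
      rw [Finset.mul_sum]
      exact Finset.sum_congr rfl fun i _ => hprop i
    rw [hdx, mul_zero] at hsum
    linarith
end
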